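/- Let n ≥ 1 and let S_n be the star graph on vertices {0,1,...,n-1}. The number of partial endomorphisms of S_n equals (n+1)^{n-1} + n^{n-1} + (n-1)·2^{n-1}. -/

import Mathlib

def pmul {V : Type*} (f g : V → Option V) : V → Option V := fun x => (f x).bind g

def pdom {V : Type*} (f : V → Option V) : Set V := {x | f x ≠ none}

def pim {V : Type*} (f : V → Option V) : Set V := {y | ∃ x, f x = some y}

def pker {V : Type*} (f : V → Option V) : V → V → Prop := fun x y => f x ≠ none ∧ f x = f y

def PInj {V : Type*} (f : V → Option V) : Prop := ∀ u v a, f u = some a → f v = some a → u = v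

def edge {n : ℕ} (u v : Fin n) : Prop := (u.val = 0 ∧ v.val ≠ 0) ∨ (v.val = 0 ∧ u.val ≠ 0)

def IsPEnd {n : ℕ} (α : Fin n → Option (Fin n)) : Prop :=
  ∀ u v a b, α u = some a → α v = some b → edge u v → edge a b

def IsPwEnd {n : ℕ} (α : Fin n → Option (Fin n)) : Prop :=
  ∀ u v a b, α u = some a → α v = some b → edge u v → a ≠ b → edge a b

def IsPsEnd {n : ℕ} (α : Fin n → Option (Fin n)) : Prop :=
  ∀ u v a b, α u = some a → α v = some b → (edge u v ↔ edge a b)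

def IsPswEnd {n : ℕ} (α : Fin n → Option (Fin n)) : Prop :=
  ∀ u v a b, α u = some a → α v = some b → ((edge u v ∧ a ≠ b) ↔ edge a b)

def PEndS (n : ℕ) : Set (Fin n → Option (Fin n)) := {α | IsPEnd α}
def PwEndS (n : ℕ) : Set (Fin n → Option (Fin n)) := {α | IsPwEnd α}
def PsEndS (n : ℕ) : Set (Fin n → Option (Fin n)) := {α | IsPsEnd α}
def PswEndS (n : ℕ) : Set (Fin n → Option (Fin n)) := {α | IsPswEnd α}
def IEndS (n : ℕ) : Set (Fin n → Option (Fin n)) := {α | PInj α ∧ IsPEnd α}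
def PAutS (n : ℕ) : Set (Fin n → Option (Fin n)) := {α | PInj α ∧ IsPsEnd α}

def RegularIn {V : Type*} (M : Set (V → Option V)) (a : V → Option V) : Prop :=
  ∃ b ∈ M, pmul (pmul a b) a = a

def GreenL {V : Type*} (M : Set (V → Option V)) (a b : V → Option V) : Prop :=
  (∃ g ∈ M, a = pmul g b) ∧ (∃ g ∈ M, b = pmul g a)

def GreenR {V : Type*} (M : Set (V → Option V)) (a b : V → Option V) : Prop :=
  (∃ g ∈ M, a = pmul b g) ∧ (∃ g ∈ M, b = pmul a g)

def GreenH {V : Type*} (M : Set (V → Option V)) (a b : V → Option V) : Prop :=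
  GreenL M a b ∧ GreenR M a b

def GreenJ {V : Type*} (M : Set (V → Option V)) (a b : V → Option V) : Prop :=
  (∃ g ∈ M, ∃ h ∈ M, a = pmul (pmul g b) h) ∧ (∃ g ∈ M, ∃ h ∈ M, b = pmul (pmul g a) h)


section StarCount

variable {n : ℕ}

def SS0 (n : ℕ) (h : 0 < n) : Set (Fin n → Option (Fin n)) :=
  {α | α ⟨0, h⟩ = none}

def SS1 (n : ℕ) (h : 0 < n) : Set (Fin n → Option (Fin n)) :=
  {α | α ⟨0, h⟩ = some ⟨0, h⟩ ∧ ∀ u : Fin n, u.val ≠ 0 → α u ≠ some ⟨0, h⟩}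

def SS2 (n : ℕ) (h : 0 < n) : Set (Fin n → Option (Fin n)) :=
  {α | α ⟨0, h⟩ ≠ none ∧ α ⟨0, h⟩ ≠ some ⟨0, h⟩ ∧
    ∀ u : Fin n, u.val ≠ 0 → α u = none ∨ α u = some ⟨0, h⟩}

lemma fin_eq_zero (h : 0 < n) {u : Fin n} (hu : u.val = 0) : u = ⟨0, h⟩ :=
  Fin.ext hu

lemma PEndS_eq (h : 0 < n) : PEndS n = SS0 n h ∪ SS1 n h ∪ SS2 n h := by
  ext α
  constructor
  · intro hα
    rcases h0 : α ⟨0, h⟩ with _ | a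
    · exact Or.inl (Or.inl h0)
    · by_cases ha : a = ⟨0, h⟩
      · subst ha
        refine Or.inl (Or.inr ⟨h0, fun u hu hc => ?_⟩)
        have he : edge (⟨0, h⟩ : Fin n) u := Or.inl ⟨rfl, hu⟩
        have := hα _ _ _ _ h0 hc he
        rcases this with ⟨h1, h2⟩ | ⟨h1, h2⟩ <;> exact h2 h1
      · refine Or.inr ⟨by simp [h0], by simp [h0, ha], fun u hu => ?_⟩
        rcases hc : α u with _ | b
        · exact Or.inl rfl
        · refine Or.inr ?_
          have he : edge (⟨0, h⟩ : Fin n) u := Or.inl ⟨rfl, hu⟩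
          have := hα _ _ _ _ h0 hc he
          have haval : a.val ≠ 0 := fun hv => ha (fin_eq_zero h hv)
          rcases this with ⟨h1, _⟩ | ⟨h1, _⟩
          · exact absurd h1 haval
          · exact congrArg some (fin_eq_zero h h1)
  · rintro (hα | hα) u v a b hu hv he
    · rcases hα with hα | hα
      · exfalso
        rcases he with ⟨h1, h2⟩ | ⟨h1, h2⟩
        · rw [fin_eq_zero h h1] at hu; rw [hα] at hu; exact nomatch hu
        · rw [fin_eq_zero h h1] at hv; rw [hα] at hv; exact nomatch hv
      · obtain ⟨hz, hrest⟩ := hα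
        rcases he with ⟨h1, h2⟩ | ⟨h1, h2⟩
        · rw [fin_eq_zero h h1, hz] at hu
          have ha : a = ⟨0, h⟩ := (Option.some_inj.mp hu).symm
          have hb : b ≠ ⟨0, h⟩ := fun hbe => hrest v h2 (hbe ▸ hv)
          exact Or.inl ⟨ha ▸ rfl, fun hb0 => hb (fin_eq_zero h hb0)⟩
        · rw [fin_eq_zero h h1, hz] at hv
          have hb : b = ⟨0, h⟩ := (Option.some_inj.mp hv).symm
          have ha : a ≠ ⟨0, h⟩ := fun hae => hrest u h2 (hae ▸ hu)
          exact Or.inr ⟨hb ▸ rfl, fun ha0 => ha (fin_eq_zero h ha0)⟩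
    · obtain ⟨h1', h2', hrest⟩ := hα
      rcases he with ⟨h1, h2⟩ | ⟨h1, h2⟩
      · rw [fin_eq_zero h h1] at hu
        have ha : a ≠ ⟨0, h⟩ := fun hae => h2' (hae ▸ hu)
        have hb : b = ⟨0, h⟩ := by
          rcases hrest v h2 with hc | hc
          · rw [hc] at hv; exact nomatch hv
          · rw [hc] at hv; exact (Option.some_inj.mp hv).symm
        exact Or.inr ⟨hb ▸ rfl, fun ha0 => ha (fin_eq_zero h ha0)⟩
      · rw [fin_eq_zero h h1] at hv
        have hb : b ≠ ⟨0, h⟩ := fun hbe => h2' (hbe ▸ hv)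
        have ha : a = ⟨0, h⟩ := by
          rcases hrest u h2 with hc | hc
          · rw [hc] at hu; exact nomatch hu
          · rw [hc] at hu; exact (Option.some_inj.mp hu).symm
        exact Or.inl ⟨ha ▸ rfl, fun hb0 => hb (fin_eq_zero h hb0)⟩

def e0 (h : 0 < n) : SS0 n h ≃ ({u : Fin n // u.val ≠ 0} → Option (Fin n)) where
  toFun α u := α.1 u.1
  invFun g := ⟨fun u => if hu : u.val = 0 then none else g ⟨u, hu⟩, by simp [SS0]⟩
  left_inv α := by
    apply Subtype.ext
    funext u
    by_cases hu : u.val = 0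
    · simp only [hu, dite_true]
      rw [fin_eq_zero h hu]
      exact α.2.symm
    · simp [hu]
  right_inv g := by
    funext u
    simp [u.2]

def e1 (h : 0 < n) :
    SS1 n h ≃ ({u : Fin n // u.val ≠ 0} → {o : Option (Fin n) // o ≠ some ⟨0, h⟩}) where
  toFun α u := ⟨α.1 u.1, α.2.2 u.1 u.2⟩
  invFun g := ⟨fun u => if hu : u.val = 0 then some ⟨0, h⟩ else (g ⟨u, hu⟩).1,
    ⟨by simp, fun u hu => by simpa [hu] using (g ⟨u, hu⟩).2⟩⟩
  left_inv α := by
    apply Subtype.ext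
    funext u
    by_cases hu : u.val = 0
    · simp only [hu, dite_true]
      rw [fin_eq_zero h hu]
      exact α.2.1.symm
    · simp [hu]
  right_inv g := by
    funext u
    apply Subtype.ext
    simp [u.2]

def e2 (h : 0 < n) :
    SS2 n h ≃ ({c : Fin n // c.val ≠ 0} × ({u : Fin n // u.val ≠ 0} → Bool)) where
  toFun α := ⟨⟨(α.1 ⟨0, h⟩).get (Option.isSome_iff_ne_none.mpr α.2.1), by
      intro hv
      apply α.2.2.1
      rw [← Option.some_get (Option.isSome_iff_ne_none.mpr α.2.1)]
      exact congrArg some (fin_eq_zero h hv)⟩,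
    fun u => (α.1 u.1).isSome⟩
  invFun p := ⟨fun u => if hu : u.val = 0 then some p.1.1
      else (if p.2 ⟨u, hu⟩ then some ⟨0, h⟩ else none),
    by simp, by simp [Fin.ext_iff]; intro hc; exact p.1.2 hc,
    fun u hu => by by_cases hg : p.2 ⟨u, hu⟩ <;> simp [hu, hg]⟩
  left_inv α := by
    apply Subtype.ext
    funext u
    by_cases hu : u.val = 0
    · simp only [hu, dite_true]
      rw [fin_eq_zero h hu]
      exact (Option.some_get _)
    · simp only [hu, dite_false]
      rcases α.2.2.2 u hu with hc | hc <;> simp [hc]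
  right_inv p := by
    refine Prod.ext (Subtype.ext ?_) ?_
    · simp
    · funext u
      by_cases hg : p.2 u <;> simp [u.2, hg]

lemma card_leaves (h : 0 < n) : Fintype.card {u : Fin n // u.val ≠ 0} = n - 1 := by
  have e : {u : Fin n // u.val ≠ 0} ≃ {u : Fin n // u ≠ ⟨0, h⟩} :=
    Equiv.subtypeEquivRight (fun u => by
      constructor
      · intro hu hc; exact hu (by rw [hc])
      · intro hu hc; exact hu (fin_eq_zero h hc))
  rw [Fintype.card_congr e, Fintype.card_subtype_compl, Fintype.card_subtype_eq,
    Fintype.card_fin]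

lemma card_notz (h : 0 < n) :
    Fintype.card {o : Option (Fin n) // o ≠ some ⟨0, h⟩} = n := by
  rw [Fintype.card_subtype_compl, Fintype.card_subtype_eq, Fintype.card_option,
    Fintype.card_fin]
  omega

end StarCount

theorem stmt3 (n : ℕ) (hn : 1 ≤ n) :
    (PEndS n).ncard = (n + 1) ^ (n - 1) + n ^ (n - 1) + (n - 1) * 2 ^ (n - 1) := by

  have h : 0 < n := hn
  have hdisj01 : Disjoint (SS0 n h) (SS1 n h) := by
    rw [Set.disjoint_left]
    intro α h0 h1
    simp only [SS0, SS1, Set.mem_setOf_eq] at h0 h1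
    rw [h0] at h1
    exact nomatch h1.1
  have hdisj2 : Disjoint (SS0 n h ∪ SS1 n h) (SS2 n h) := by
    rw [Set.disjoint_left]
    rintro α (h0 | h1) h2
    · exact h2.1 h0
    · exact h2.2.1 h1.1
  rw [PEndS_eq h, Set.ncard_union_eq hdisj2 (Set.toFinite _) (Set.toFinite _),
    Set.ncard_union_eq hdisj01 (Set.toFinite _) (Set.toFinite _)]
  have c0 : (SS0 n h).ncard = (n + 1) ^ (n - 1) := by
    rw [← Nat.card_coe_set_eq, Nat.card_congr (e0 h), Nat.card_eq_fintype_card,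
      Fintype.card_fun, Fintype.card_option, Fintype.card_fin, card_leaves h]
  have c1 : (SS1 n h).ncard = n ^ (n - 1) := by
    rw [← Nat.card_coe_set_eq, Nat.card_congr (e1 h), Nat.card_eq_fintype_card,
      Fintype.card_fun, card_notz h, card_leaves h]
  have c2 : (SS2 n h).ncard = (n - 1) * 2 ^ (n - 1) := by
    rw [← Nat.card_coe_set_eq, Nat.card_congr (e2 h), Nat.card_eq_fintype_card,
      Fintype.card_prod, Fintype.card_fun, Fintype.card_bool, card_leaves h]
  rw [c0, c1, c2]
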